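/- Let (μ_n) be a sequence in 𝓜 converging weakly to μ ∈ 𝓜 with lim_{n→∞} ∫ log η dμ_n = ∫ log η dμ > −∞. If μ gives zero mass to the boundaries of the atoms of 𝒫, then for every q ≥ 1, lim_{n→∞} H_{μ_n}(⋁_{i=0}^{q−1} f^{−i}𝒫) = H_μ(⋁_{i=0}^{q−1} f^{−i}𝒫). -/

import Mathlib

open MeasureTheory Filter Metric Set
open scoped ENNReal NNReal Topology

noncomputable section

variable {X : Type*} [MetricSpace X] [CompactSpace X] [MeasurableSpace X] [BorelSpace X]

/-- `Ω = X \ ⋃_{i ≥ 0} f^{-i}(I)`: the set of points whose whole forward orbit avoids `I`. -/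
def dynOmega (f : X → X) (I : Set X) : Set X := {x | ∀ n : ℕ, f^[n] x ∉ I}

/-- `μ ∈ 𝓜`: a Borel probability measure with `μ(I) = 0` which is invariant, `f_* μ = μ`. -/
def MemM (f : X → X) (I : Set X) (μ : Measure X) : Prop :=
  IsProbabilityMeasure μ ∧ μ I = 0 ∧ Measure.map f μ = μ

/-- A countable Borel partition of a set `S`, indexed by `ℕ` (empty atoms are allowed). -/
def IsCountablePartition (S : Set X) (P : ℕ → Set X) : Prop :=
  (∀ i, MeasurableSet (P i)) ∧ (Pairwise fun i j => Disjoint (P i) (P j)) ∧ (⋃ i, P i) = S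

/-- The entropy `H_ν(P) = ∑_{P ∈ 𝒫} - ν(P) log ν(P)` of a countable partition,
with values in `ℝ≥0∞`. -/
def partEntropy {ι : Type*} (ν : Measure X) (P : ι → Set X) : ℝ≥0∞ :=
  ∑' i, ENNReal.ofReal (Real.negMulLog (ν (P i)).toReal)

/-- The atoms of the refined partition `⋁_{i=0}^{q-1} f^{-i} 𝒫`. -/
def refinedAtoms (f : X → X) (P : ℕ → Set X) (q : ℕ) : (Fin q → ℕ) → Set X :=
  fun s => ⋂ i : Fin q, f^[(i : ℕ)] ⁻¹' P (s i)

/-- `V_n = {x : e^{-(n+1)} < η x ≤ e^{-n}}`. -/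
def Vset (η : X → ℝ) (n : ℕ) : Set X :=
  {x | Real.exp (-(n + 1 : ℝ)) < η x ∧ η x ≤ Real.exp (-(n : ℝ))}

/-- The Mané partition `𝒫` associated to `η` on a manifold of complex dimension `k`:
a countable Borel partition of `{η ≠ 0}` such that every nonempty atom is contained in
some `V_n` and has diameter `< r_n = e^{-(n+1)}`, and such that the number of atoms
contained in `V_n` is at most `C (1/r_n)^{2k} = C e^{2k(n+1)}` for a constant `C > 0`. -/
def IsManePartition (k : ℕ) (η : X → ℝ) (P : ℕ → Set X) : Prop :=
  IsCountablePartition {x | η x ≠ 0} P ∧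
  (∀ i, (P i).Nonempty → ∃ n : ℕ, P i ⊆ Vset η n ∧
      Metric.diam (P i) < Real.exp (-(n + 1 : ℝ))) ∧
  (∃ C > (0 : ℝ), ∀ n : ℕ,
      {i | (P i).Nonempty ∧ P i ⊆ Vset η n}.Finite ∧
      (({i | (P i).Nonempty ∧ P i ⊆ Vset η n}.ncard : ℝ)
        ≤ C * Real.exp (2 * k * (n + 1 : ℝ))))

set_option linter.unusedSectionVars false
set_option maxHeartbeats 1000000

open scoped Classical

namespace EntropyAux

lemma frontier_preimage_subset {f : X → X} {I : Set X} (hI : IsClosed I)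
    (hfc : ContinuousOn f Iᶜ) (S : Set X) :
    frontier (f ⁻¹' S) ⊆ I ∪ f ⁻¹' (frontier S) := by
  intro x hx
  by_cases hxI : x ∈ I
  · exact Or.inl hxI
  refine Or.inr ?_
  have hca : ContinuousAt f x := hfc.continuousAt (hI.isOpen_compl.mem_nhds hxI)
  by_contra hfx
  have h1 : x ∈ closure (f ⁻¹' S) := frontier_subset_closure hx
  have h2 : x ∉ interior (f ⁻¹' S) := hx.2
  rcases (em (f x ∈ closure S)) with hc | hc
  · have hint : f x ∈ interior S := by
      by_contra hint
      exact hfx ⟨hc, hint⟩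
    have hnb : f ⁻¹' interior S ∈ 𝓝 x := hca.preimage_mem_nhds (isOpen_interior.mem_nhds hint)
    exact h2 (mem_interior_iff_mem_nhds.2 (Filter.mem_of_superset hnb
      (preimage_mono interior_subset)))
  · have hnb : f ⁻¹' (closure S)ᶜ ∈ 𝓝 x :=
      hca.preimage_mem_nhds (isClosed_closure.isOpen_compl.mem_nhds hc)
    have : x ∈ interior ((f ⁻¹' S)ᶜ) :=
      mem_interior_iff_mem_nhds.2 (Filter.mem_of_superset hnb
        (fun y hy hyS => hy (subset_closure hyS)))
    rw [interior_compl] at this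
    exact this h1

lemma frontier_preimage_iterate_subset {f : X → X} {I : Set X} (hI : IsClosed I)
    (hfc : ContinuousOn f Iᶜ) (i : ℕ) (S : Set X) :
    frontier (f^[i] ⁻¹' S) ⊆ (⋃ l, f^[l] ⁻¹' I) ∪ f^[i] ⁻¹' (frontier S) := by
  induction i with
  | zero => simp
  | succ i ih =>
    have hiter : f^[i+1] ⁻¹' S = f ⁻¹' (f^[i] ⁻¹' S) := by
      rw [Function.iterate_succ]; rfl
    have hiter' : ∀ (l : ℕ) (T : Set X), f ⁻¹' (f^[l] ⁻¹' T) = f^[l+1] ⁻¹' T := by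
      intro l T; rw [Function.iterate_succ]; rfl
    rw [hiter]
    refine (frontier_preimage_subset hI hfc _).trans ?_
    intro x hx
    rcases hx with hx | hx
    · exact Or.inl (mem_iUnion.2 ⟨0, by simpa using hx⟩)
    · have := preimage_mono (f := f) ih hx
      rw [preimage_union] at this
      rcases this with h | h
      · rw [preimage_iUnion] at h
        rcases mem_iUnion.1 h with ⟨l, hl⟩
        rw [hiter' l] at hl
        exact Or.inl (mem_iUnion.2 ⟨l + 1, hl⟩)
      · rw [hiter' i] at h
        exact Or.inr h

lemma frontier_iInter_subset {q : ℕ} (S : Fin q → Set X) :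
    frontier (⋂ i, S i) ⊆ ⋃ i, frontier (S i) := by
  intro x hx
  by_contra h
  have hint : ∀ i, x ∈ interior (S i) := by
    intro i
    have hxc : x ∈ closure (S i) :=
      closure_mono (iInter_subset S i) (frontier_subset_closure hx)
    by_contra hxint
    exact h (mem_iUnion.2 ⟨i, hxc, hxint⟩)
  have : (⋂ i, interior (S i)) ∈ 𝓝 x :=
    Filter.iInter_mem.2 fun i => isOpen_interior.mem_nhds (hint i)
  exact hx.2 (mem_interior_iff_mem_nhds.2 (Filter.mem_of_superset this
    (iInter_mono fun i => interior_subset)))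

lemma iterate_invariant {f : X → X} (hf : Measurable f) {ν : Measure X}
    (hν : Measure.map f ν = ν) (i : ℕ) {S : Set X} (hS : MeasurableSet S) :
    ν (f^[i] ⁻¹' S) = ν S := by
  induction i with
  | zero => simp
  | succ i ih =>
    have : f^[i+1] ⁻¹' S = f ⁻¹' (f^[i] ⁻¹' S) := by rw [Function.iterate_succ]; rfl
    rw [this, ← Measure.map_apply hf ((hf.iterate i) hS), hν, ih]

lemma measurableSet_dynOmega {f : X → X} {I : Set X} (hf : Measurable f)
    (hI : MeasurableSet I) : MeasurableSet (dynOmega f I) := by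
  have : dynOmega f I = ⋂ n, f^[n] ⁻¹' Iᶜ := by
    ext x; simp [dynOmega]
  rw [this]
  exact MeasurableSet.iInter fun n => (hf.iterate n) hI.compl

lemma dynOmega_compl_null {f : X → X} {I : Set X} (hf : Measurable f)
    (hI : MeasurableSet I) {ν : Measure X} (hνI : ν I = 0) (hν : Measure.map f ν = ν) :
    ν (dynOmega f I)ᶜ = 0 := by
  have hc : (dynOmega f I)ᶜ = ⋃ n, f^[n] ⁻¹' I := by
    ext x; simp [dynOmega]
  rw [hc]
  refine le_antisymm (le_trans (measure_iUnion_le _) ?_) (zero_le)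
  have : ∀ n : ℕ, ν (f^[n] ⁻¹' I) = 0 := fun n => by
    rw [iterate_invariant hf hν n hI, hνI]
  simp [this]

lemma mapsTo_dynOmega {f : X → X} {I : Set X} (i : ℕ) :
    dynOmega f I ⊆ f^[i] ⁻¹' (dynOmega f I) := by
  intro x hx n
  rw [← Function.iterate_add_apply]
  exact hx (n + i)

lemma negMulLog_le_exp_neg_one {p : ℝ} (hp : 0 ≤ p) : Real.negMulLog p ≤ Real.exp (-1) := by
  rcases eq_or_lt_of_le hp with h | h
  · simp [← h, (Real.exp_pos (-1)).le]
  · have hlog : Real.log p⁻¹ ≤ p⁻¹ * Real.exp (-1) := by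
      have h1 : Real.log (p⁻¹ * Real.exp (-1)) ≤ p⁻¹ * Real.exp (-1) - 1 :=
        Real.log_le_sub_one_of_pos (by positivity)
      have h2 : Real.log (p⁻¹ * Real.exp (-1)) = Real.log p⁻¹ + (-1) := by
        rw [Real.log_mul (by positivity) (Real.exp_ne_zero _), Real.log_exp]
      linarith
    have : Real.negMulLog p = p * Real.log p⁻¹ := by
      rw [Real.negMulLog, Real.log_inv]; ring
    rw [this]
    calc p * Real.log p⁻¹ ≤ p * (p⁻¹ * Real.exp (-1)) := by
          exact mul_le_mul_of_nonneg_left hlog hp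
      _ = Real.exp (-1) := by field_simp
  
lemma negMulLog_le_linear {p : ℝ} (a : ℝ) (hp : 0 ≤ p) :
    Real.negMulLog p ≤ a * p + Real.exp (-(a + 1)) := by
  rcases eq_or_lt_of_le hp with h | h
  · simp [← h, (Real.exp_pos _).le]
  · have key : Real.negMulLog p - a * p = Real.exp (-a) * Real.negMulLog (p * Real.exp a) := by
      have h1 : Real.exp (-a) * Real.exp a = 1 := by rw [← Real.exp_add]; simp
      rw [Real.negMulLog, Real.negMulLog,
        Real.log_mul (ne_of_gt h) (Real.exp_ne_zero _), Real.log_exp]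
      have h2 : Real.exp (-a) * (-(p * Real.exp a) * (Real.log p + a))
          = (Real.exp (-a) * Real.exp a) * (-p * Real.log p - a * p) := by ring
      rw [h2, h1, one_mul]
    have h2 : Real.negMulLog (p * Real.exp a) ≤ Real.exp (-1) :=
      negMulLog_le_exp_neg_one (by positivity)
    have h3 : Real.exp (-a) * Real.negMulLog (p * Real.exp a) ≤ Real.exp (-a) * Real.exp (-1) :=
      mul_le_mul_of_nonneg_left h2 (Real.exp_pos _).le
    have h4 : Real.exp (-a) * Real.exp (-1) = Real.exp (-(a+1)) := by
      rw [← Real.exp_add]; ring_nf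
    linarith

/-- product of sums formula in `ℝ≥0∞` for functions on `Fin q → ℕ`. -/
lemma tsum_pi_prod : ∀ (q : ℕ) (g : Fin q → ℕ → ℝ≥0∞),
    ∑' s : Fin q → ℕ, ∏ i, g i (s i) = ∏ i, ∑' j, g i j := by
  intro q
  induction q with
  | zero =>
    intro g
    simp only [Finset.univ_eq_empty, Finset.prod_empty]
    haveI : Unique (Fin 0 → ℕ) := ⟨⟨fun i => i.elim0⟩, fun s => funext fun i => i.elim0⟩
    rw [tsum_eq_single default (fun b hb => absurd (Subsingleton.elim b default) hb)]
  | succ q ih =>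
    intro g
    rw [← (Fin.consEquiv (fun _ : Fin (q+1) => ℕ)).tsum_eq]
    have : ∀ p : ℕ × (Fin q → ℕ),
        (∏ i, g i ((Fin.consEquiv (fun _ : Fin (q+1) => ℕ)) p i))
          = g 0 p.1 * ∏ i : Fin q, g i.succ (p.2 i) := by
      intro p
      rw [Fin.prod_univ_succ]
      simp [Fin.consEquiv]
    calc ∑' p : ℕ × (Fin q → ℕ), ∏ i, g i ((Fin.consEquiv (fun _ : Fin (q+1) => ℕ)) p i)
        = ∑' (a : ℕ) (t : Fin q → ℕ), g 0 a * ∏ i : Fin q, g i.succ (t i) := by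
          rw [tsum_congr this,
            ENNReal.tsum_prod (f := fun (a : ℕ) (t : Fin q → ℕ) => g 0 a * ∏ i : Fin q, g i.succ (t i))]
      _ = (∑' a : ℕ, g 0 a) * ∑' t : Fin q → ℕ, ∏ i : Fin q, g i.succ (t i) := by
          rw [← ENNReal.tsum_mul_right]
          congr 1; ext a; rw [ENNReal.tsum_mul_left]
      _ = ∏ i, ∑' j, g i j := by
          rw [ih, Fin.prod_univ_succ]

example (f : ℕ → ℝ≥0∞) (g : ℕ → ℕ) : ∑' x, ∑' b : g ⁻¹' {x}, f b = ∑' i, f i :=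
  ENNReal.tsum_fiberwise f g


lemma vset_disjoint {η : X → ℝ} : Pairwise fun n m => Disjoint (Vset η n) (Vset η m) := by
  have key : ∀ n m : ℕ, n < m → Disjoint (Vset η n) (Vset η m) := by
    intro n m hnm
    rw [Set.disjoint_left]
    rintro x ⟨hx1, _⟩ ⟨_, hx4⟩
    have : Real.exp (-(m : ℝ)) ≤ Real.exp (-(n + 1 : ℝ)) := by
      apply Real.exp_le_exp.2; push_cast
      have : (n : ℝ) + 1 ≤ (m : ℝ) := by exact_mod_cast hnm
      linarith
    linarith
  intro n m hnm
  rcases lt_or_gt_of_ne hnm with h | h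
  · exact key n m h
  · exact (key m n h).symm

/-- Grouping by a coordinate: the refined atoms with `s i = j` all sit inside
`f^[i] ⁻¹' (Q j)`, which has `ν`-measure at most `ν (P j)`. -/
lemma coord_group_le {f : X → X} (hf : Measurable f) {ν : Measure X}
    (hν : Measure.map f ν = ν)
    {P : ℕ → Set X} (hPm : ∀ j, MeasurableSet (P j))
    (hPd : Pairwise fun i j => Disjoint (P i) (P j))
    {Q : ℕ → Set X} (hQm : ∀ j, MeasurableSet (Q j)) (hQP : ∀ j, Q j ⊆ P j)
    {q : ℕ} (i : Fin q) (c : ℕ → ℝ≥0∞) :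
    ∑' s : Fin q → ℕ, c (s i) * ν (⋂ i' : Fin q, f^[(i' : ℕ)] ⁻¹' Q (s i'))
      ≤ ∑' j : ℕ, c j * ν (P j) := by
  set A : (Fin q → ℕ) → Set X := fun s => ⋂ i' : Fin q, f^[(i' : ℕ)] ⁻¹' Q (s i') with hA
  have hAm : ∀ s, MeasurableSet (A s) := fun s =>
    MeasurableSet.iInter fun i' => (hf.iterate _) (hQm _)
  have hAd : Pairwise fun s t => Disjoint (A s) (A t) := by
    intro s t hst
    have : ∃ i₀, s i₀ ≠ t i₀ := by
      by_contra h
      push_neg at h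
      exact hst (funext h)
    rcases this with ⟨i₀, hi₀⟩
    have hd : Disjoint (Q (s i₀)) (Q (t i₀)) :=
      ((hPd hi₀).mono (hQP _) (hQP _))
    exact Disjoint.mono (iInter_subset _ i₀) (iInter_subset _ i₀) (hd.preimage _)
  rw [← ENNReal.tsum_fiberwise (fun s => c (s i) * ν (A s)) (fun s => s i)]
  refine ENNReal.tsum_le_tsum fun j => ?_
  have hcongr : ∀ s : ((fun s : Fin q → ℕ => s i) ⁻¹' {j}),
      c ((s : Fin q → ℕ) i) * ν (A s) = c j * ν (A s) := by
    rintro ⟨s, hs⟩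
    simp only [mem_preimage, mem_singleton_iff] at hs
    simp [hs]
  rw [tsum_congr hcongr, ENNReal.tsum_mul_left]
  refine mul_le_mul_right ?_ _
  have hsub : Pairwise (Function.onFun Disjoint
      fun s : ((fun s : Fin q → ℕ => s i) ⁻¹' {j}) => A s) := by
    intro s t hst
    exact hAd fun h => hst (Subtype.ext h)
  rw [← measure_iUnion hsub fun s => hAm _]
  calc ν (⋃ s : ((fun s : Fin q → ℕ => s i) ⁻¹' {j}), A s)
      ≤ ν (f^[(i : ℕ)] ⁻¹' (P j)) := by
        refine measure_mono (iUnion_subset fun s => ?_)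
        have hsi : (s : Fin q → ℕ) i = j := s.2
        refine le_trans (iInter_subset _ i) ?_
        rw [hsi]
        exact preimage_mono (hQP j)
    _ = ν (P j) := iterate_invariant hf hν _ (hPm j)

lemma tsum_exp_pow_le_one : ∑' m : ℕ, ENNReal.ofReal (Real.exp (-1)) ^ (m + 1) ≤ 1 := by
  set r : ℝ≥0∞ := ENNReal.ofReal (Real.exp (-1)) with hr
  have hrhalf : r ≤ 1/2 := by
    rw [hr]
    have h2 : Real.exp (-1) ≤ 1/2 := by
      rw [Real.exp_neg]
      rw [inv_le_iff_one_le_mul₀ (Real.exp_pos 1)]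
      nlinarith [Real.add_one_le_exp (1 : ℝ)]
    calc ENNReal.ofReal (Real.exp (-1)) ≤ ENNReal.ofReal (1/2) := ENNReal.ofReal_le_ofReal h2
      _ = 1/2 := by norm_num [ENNReal.ofReal_div_of_pos]
  have hsum : ∑' m : ℕ, r ^ (m + 1) = r * (1 - r)⁻¹ := by
    have : ∀ m : ℕ, r ^ (m + 1) = r * r ^ m := fun m => by rw [pow_succ]; ring
    rw [tsum_congr this, ENNReal.tsum_mul_left, ENNReal.tsum_geometric]
  rw [hsum]
  have h1 : (1 : ℝ≥0∞)/2 ≤ 1 - r := by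
    refine ENNReal.le_sub_of_add_le_left ENNReal.ofReal_ne_top ?_
    calc r + 1/2 ≤ 1/2 + 1/2 := add_le_add hrhalf le_rfl
      _ = 1 := ENNReal.add_halves 1
  have h2 : (1 - r)⁻¹ ≤ 2 := by
    calc (1 - r)⁻¹ ≤ ((1 : ℝ≥0∞)/2)⁻¹ := ENNReal.inv_le_inv' h1
      _ = 2 := by simp
  calc r * (1 - r)⁻¹ ≤ (1/2) * 2 := mul_le_mul' hrhalf h2
    _ = 1 := by
        rw [one_div, ENNReal.inv_mul_cancel two_ne_zero ENNReal.ofNat_ne_top]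


lemma count_sum_le {η : X → ℝ} {P : ℕ → Set X} {lev : ℕ → ℕ}
    (hlev : ∀ j, (P j).Nonempty → P j ⊆ Vset η (lev j))
    {k : ℕ} {C : ℝ} (hC : 0 ≤ C)
    (hJ : ∀ m : ℕ, {i | (P i).Nonempty ∧ P i ⊆ Vset η m}.Finite ∧
      (({i | (P i).Nonempty ∧ P i ⊆ Vset η m}.ncard : ℝ)
        ≤ C * Real.exp (2 * k * (m + 1 : ℝ))))
    (t : ℕ) :
    ∑' j : ℕ, (if (P j).Nonempty ∧ t ≤ lev j + 1
        then ENNReal.ofReal (Real.exp (-(2 * (k : ℝ) + 2))) ^ (lev j + 1) else 0)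
      ≤ ENNReal.ofReal C * ENNReal.ofReal (Real.exp (-(t : ℝ))) := by
  set x : ℝ≥0∞ := ENNReal.ofReal (Real.exp (-(2 * (k : ℝ) + 2))) with hx
  set F : ℕ → ℝ≥0∞ := fun j =>
    if (P j).Nonempty ∧ t ≤ lev j + 1 then x ^ (lev j + 1) else 0 with hF
  rw [← ENNReal.tsum_fiberwise F lev]
  have step1 : ∀ m : ℕ, (∑' j : (lev ⁻¹' {m} : Set ℕ), F j)
      ≤ ENNReal.ofReal (C * Real.exp (2 * k * (m + 1 : ℝ))) *
          (if t ≤ m + 1 then x ^ (m + 1) else 0) := by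
    intro m
    set Jm := {i | (P i).Nonempty ∧ P i ⊆ Vset η m} with hJm
    set cst : ℝ≥0∞ := if t ≤ m + 1 then x ^ (m + 1) else 0 with hcst
    have hsub : (∑' j : (lev ⁻¹' {m} : Set ℕ), F j)
        ≤ ∑' j : ℕ, Jm.indicator (fun _ => cst) j := by
      rw [tsum_subtype]
      refine ENNReal.tsum_le_tsum fun j => ?_
      by_cases hj : j ∈ (lev ⁻¹' {m} : Set ℕ)
      · rw [Set.indicator_of_mem hj]
        have hjm : lev j = m := hj
        simp only [hF]
        by_cases hcond : (P j).Nonempty ∧ t ≤ lev j + 1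
        · have hjJ : j ∈ Jm := by
            rw [hJm]
            exact ⟨hcond.1, by rw [← hjm]; exact hlev j hcond.1⟩
          rw [if_pos hcond, Set.indicator_of_mem hjJ, hcst,
            if_pos (by rw [← hjm]; exact hcond.2), hjm]
        · rw [if_neg hcond]
          exact zero_le
      · rw [Set.indicator_of_notMem hj]
        exact zero_le
    have hfin := (hJ m).1
    have hcount : ∑' j : ℕ, Jm.indicator (fun _ => cst) j = (Jm.ncard : ℝ≥0∞) * cst := by
      rw [tsum_eq_sum (s := hfin.toFinset)
        (fun b hb => Set.indicator_of_notMem (fun h => hb (hfin.mem_toFinset.2 h)) _)]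
      rw [Finset.sum_congr rfl (fun j hj =>
        Set.indicator_of_mem (hfin.mem_toFinset.1 hj) (fun _ => cst))]
      rw [Finset.sum_const, nsmul_eq_mul]
      congr 1
      rw [Set.ncard_eq_toFinset_card Jm hfin]
    refine hsub.trans ?_
    rw [hcount]
    refine mul_le_mul_left ?_ _
    rw [← ENNReal.ofReal_natCast]
    exact ENNReal.ofReal_le_ofReal (hJ m).2
  refine le_trans (ENNReal.tsum_le_tsum step1) ?_
  have step2 : ∀ m : ℕ,
      ENNReal.ofReal (C * Real.exp (2 * k * (m + 1 : ℝ))) *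
          (if t ≤ m + 1 then x ^ (m + 1) else 0)
        ≤ (ENNReal.ofReal C * ENNReal.ofReal (Real.exp (-(t : ℝ)))) *
            ENNReal.ofReal (Real.exp (-1)) ^ (m + 1) := by
    intro m
    by_cases hT : t ≤ m + 1
    · rw [if_pos hT, hx]
      rw [← ENNReal.ofReal_pow (Real.exp_nonneg _), ← Real.exp_nat_mul]
      rw [← ENNReal.ofReal_pow (Real.exp_nonneg _), ← Real.exp_nat_mul]
      rw [← ENNReal.ofReal_mul (by positivity), ← ENNReal.ofReal_mul hC,
        ← ENNReal.ofReal_mul (by positivity), mul_assoc C, ← Real.exp_add,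
        mul_assoc C, ← Real.exp_add]
      refine ENNReal.ofReal_le_ofReal (mul_le_mul_of_nonneg_left (Real.exp_le_exp.2 ?_) hC)
      have htm : (t : ℝ) ≤ (m : ℝ) + 1 := by exact_mod_cast hT
      push_cast
      nlinarith [htm]
    · rw [if_neg hT, mul_zero]
      exact zero_le
  refine le_trans (ENNReal.tsum_le_tsum step2) ?_
  rw [ENNReal.tsum_mul_left]
  calc (ENNReal.ofReal C * ENNReal.ofReal (Real.exp (-(t : ℝ)))) *
        ∑' m : ℕ, ENNReal.ofReal (Real.exp (-1)) ^ (m + 1)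
      ≤ (ENNReal.ofReal C * ENNReal.ofReal (Real.exp (-(t : ℝ)))) * 1 :=
        mul_le_mul_right tsum_exp_pow_le_one _
    _ = _ := mul_one _

lemma weight_sum_le_lintegral {ν : Measure X} {η : X → ℝ} {P : ℕ → Set X}
    (hPm : ∀ j, MeasurableSet (P j))
    (hPd : Pairwise fun i j => Disjoint (P i) (P j))
    {lev : ℕ → ℕ} (hlev : ∀ j, (P j).Nonempty → P j ⊆ Vset η (lev j))
    (t : ℕ) :
    ∑' j : ℕ, (if t ≤ lev j + 1 then ENNReal.ofReal ((lev j : ℝ) + 1) else 0) * ν (P j)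
      ≤ ∫⁻ x, ({y : X | η y ≤ Real.exp (1 - (t : ℝ))}.indicator
          (fun y => ENNReal.ofReal (1 - Real.log (η y)))) x ∂ν := by
  set g : X → ℝ≥0∞ := {y : X | η y ≤ Real.exp (1 - (t : ℝ))}.indicator
      (fun y => ENNReal.ofReal (1 - Real.log (η y))) with hg
  have step : ∀ j, (if t ≤ lev j + 1 then ENNReal.ofReal ((lev j : ℝ) + 1) else 0) * ν (P j)
      ≤ ∫⁻ x in P j, g x ∂ν := by
    intro j
    by_cases hne : (P j).Nonempty
    swap
    · simp [not_nonempty_iff_eq_empty.1 hne]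
    by_cases hT : t ≤ lev j + 1
    swap
    · simp [hT]
    have hPV := hlev j hne
    have key : ∀ x ∈ P j, ENNReal.ofReal ((lev j : ℝ) + 1) ≤ g x := by
      intro x hxP
      have hxV := hPV hxP
      have hx1 : Real.exp (-((lev j : ℝ) + 1)) < η x := hxV.1
      have hx2 : η x ≤ Real.exp (-(lev j : ℝ)) := hxV.2
      have hxpos : 0 < η x := lt_trans (Real.exp_pos _) hx1
      have hmem : x ∈ {y : X | η y ≤ Real.exp (1 - (t : ℝ))} := by
        refine le_trans hx2 (Real.exp_le_exp.2 ?_)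
        have : (t : ℝ) ≤ (lev j : ℝ) + 1 := by exact_mod_cast hT
        linarith
      rw [hg, Set.indicator_of_mem hmem]
      refine ENNReal.ofReal_le_ofReal ?_
      have : Real.log (η x) ≤ -(lev j : ℝ) := (Real.log_le_iff_le_exp hxpos).2 hx2
      linarith
    rw [if_pos hT]
    calc ENNReal.ofReal ((lev j : ℝ) + 1) * ν (P j)
        = ∫⁻ _ in P j, ENNReal.ofReal ((lev j : ℝ) + 1) ∂ν := (setLIntegral_const _ _).symm
      _ ≤ ∫⁻ x in P j, g x ∂ν := setLIntegral_mono' (hPm j) key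
  refine le_trans (ENNReal.tsum_le_tsum step) ?_
  rw [← lintegral_iUnion hPm hPd g]
  exact setLIntegral_le_lintegral _ _

lemma integrable_min_neg_log {ν : Measure X} [IsFiniteMeasure ν] {η : X → ℝ}
    (hηc : Continuous η) (hη01 : ∀ x, η x ∈ Icc (0:ℝ) 1) {T : ℝ} (hT : 0 ≤ T) :
    Integrable (fun x => min (-Real.log (η x)) T) ν := by
  have hm : Measurable fun x => min (-Real.log (η x)) T :=
    ((Real.measurable_log.comp hηc.measurable).neg).min measurable_const
  refine (integrable_const T).mono' hm.aestronglyMeasurable ?_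
  refine Filter.Eventually.of_forall fun x => ?_
  have h0 : 0 ≤ -Real.log (η x) := by
    have := Real.log_nonpos (hη01 x).1 (hη01 x).2
    linarith
  rw [Real.norm_eq_abs, abs_of_nonneg (le_min h0 hT)]
  exact min_le_right _ _

lemma lintegral_tail_le {ν : Measure X} [IsProbabilityMeasure ν] {η : X → ℝ}
    (hηc : Continuous η) (hη01 : ∀ x, η x ∈ Icc (0:ℝ) 1)
    (hzero : ν {x | η x = 0} = 0)
    (hint : Integrable (fun x => Real.log (η x)) ν)
    (t : ℕ) (ht : 2 ≤ t) :
    ∫⁻ x, ({y : X | η y ≤ Real.exp (1 - (t : ℝ))}.indicator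
        (fun y => ENNReal.ofReal (1 - Real.log (η y)))) x ∂ν
      ≤ ENNReal.ofReal (4 * ((∫ x, -Real.log (η x) ∂ν)
          - ∫ x, min (-Real.log (η x)) (((t : ℝ) - 1)/2) ∂ν)) := by
  set t' : ℝ := ((t : ℝ) - 1)/2 with ht'
  have ht2 : (2 : ℝ) ≤ (t : ℝ) := by exact_mod_cast ht
  have ht'0 : 0 ≤ t' := by rw [ht']; linarith
  set ψ : X → ℝ := fun x => -Real.log (η x) - min (-Real.log (η x)) t' with hψ
  have hψ0 : ∀ x, 0 ≤ ψ x := fun x => by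
    simp only [hψ, sub_nonneg]
    exact min_le_left _ _
  have hintmin : Integrable (fun x => min (-Real.log (η x)) t') ν :=
    integrable_min_neg_log hηc hη01 ht'0
  have hintneg : Integrable (fun x => -Real.log (η x)) ν := hint.neg
  have hintψ : Integrable ψ ν := hintneg.sub hintmin
  have hae : ∀ᵐ x ∂ν, ({y : X | η y ≤ Real.exp (1 - (t : ℝ))}.indicator
      (fun y => ENNReal.ofReal (1 - Real.log (η y)))) x ≤ ENNReal.ofReal (4 * ψ x) := by
    have hcompl : ∀ᵐ x ∂ν, η x ≠ 0 := by
      rw [ae_iff]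
      simpa using hzero
    filter_upwards [hcompl] with x hx
    by_cases hmem : x ∈ {y : X | η y ≤ Real.exp (1 - (t : ℝ))}
    · rw [Set.indicator_of_mem hmem]
      have hxpos : 0 < η x := lt_of_le_of_ne (hη01 x).1 (Ne.symm hx)
      have hL : (t : ℝ) - 1 ≤ -Real.log (η x) := by
        have := (Real.log_le_iff_le_exp hxpos).2 hmem
        linarith
      have hψeq : ψ x = -Real.log (η x) - t' := by
        simp only [hψ]
        rw [min_eq_right (by rw [ht']; linarith)]
      refine ENNReal.ofReal_le_ofReal ?_
      rw [hψeq, ht']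
      linarith
    · rw [Set.indicator_of_notMem hmem]
      exact zero_le
  refine le_trans (lintegral_mono_ae hae) ?_
  have heq : ENNReal.ofReal (∫ x, 4 * ψ x ∂ν) = ∫⁻ x, ENNReal.ofReal (4 * ψ x) ∂ν :=
    ofReal_integral_eq_lintegral_ofReal (hintψ.const_mul 4)
      (Filter.Eventually.of_forall fun x => mul_nonneg (by norm_num) (hψ0 x))
  rw [← heq]
  refine ENNReal.ofReal_le_ofReal (le_of_eq ?_)
  rw [integral_const_mul]
  congr 1
  exact integral_sub hintneg hintmin


/-- The tail of the integral of `-log η` at truncation level `T`. -/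
def Dtail (η : X → ℝ) (ν : Measure X) (T : ℝ) : ℝ :=
  (∫ x, -Real.log (η x) ∂ν) - ∫ x, min (-Real.log (η x)) T ∂ν

lemma Dtail_antitone {η : X → ℝ} (hηc : Continuous η) (hη01 : ∀ x, η x ∈ Icc (0:ℝ) 1)
    {ν : Measure X} [IsFiniteMeasure ν] {T T' : ℝ} (hT : 0 ≤ T) (hTT' : T ≤ T') :
    Dtail η ν T' ≤ Dtail η ν T := by
  refine sub_le_sub_left ?_ _
  refine integral_mono (integrable_min_neg_log hηc hη01 hT)
    (integrable_min_neg_log hηc hη01 (hT.trans hTT')) fun x => ?_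
  exact min_le_min le_rfl hTT'

lemma tendsto_Dtail_zero {η : X → ℝ} (hηc : Continuous η) (hη01 : ∀ x, η x ∈ Icc (0:ℝ) 1)
    {ν : Measure X} [IsProbabilityMeasure ν]
    (hint : Integrable (fun x => Real.log (η x)) ν) :
    Tendsto (fun T : ℕ => Dtail η ν (T : ℝ)) atTop (𝓝 0) := by
  have h1 : Tendsto (fun T : ℕ => ∫ x, min (-Real.log (η x)) (T : ℝ) ∂ν) atTop
      (𝓝 (∫ x, -Real.log (η x) ∂ν)) := by
    refine tendsto_integral_of_dominated_convergence (fun x => -Real.log (η x))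
      (fun T => (integrable_min_neg_log hηc hη01 (T.cast_nonneg)).aestronglyMeasurable)
      hint.neg ?_ ?_
    · intro T
      refine Filter.Eventually.of_forall fun x => ?_
      have h0 : 0 ≤ -Real.log (η x) := by
        have := Real.log_nonpos (hη01 x).1 (hη01 x).2
        linarith
      rw [Real.norm_eq_abs, abs_of_nonneg (le_min h0 (T.cast_nonneg))]
      exact min_le_left _ _
    · refine Filter.Eventually.of_forall fun x => ?_
      refine Tendsto.congr' ?_ tendsto_const_nhds
      filter_upwards [Filter.eventually_ge_atTop ⌈-Real.log (η x)⌉₊] with T hT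
      refine (min_eq_left ?_).symm
      exact le_trans (Nat.le_ceil _) (by exact_mod_cast hT)
  have : Tendsto (fun T : ℕ => Dtail η ν (T : ℝ)) atTop
      (𝓝 ((∫ x, -Real.log (η x) ∂ν) - ∫ x, -Real.log (η x) ∂ν)) :=
    tendsto_const_nhds.sub h1
  simpa using this

lemma tendsto_Dtail_in_n {η : X → ℝ} (hηc : Continuous η) (hη01 : ∀ x, η x ∈ Icc (0:ℝ) 1)
    {μseq : ℕ → Measure X} {μ : Measure X}
    [∀ n, IsProbabilityMeasure (μseq n)] [IsProbabilityMeasure μ]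
    (hweak : ∀ g : C(X, ℝ),
      Tendsto (fun n => ∫ x, g x ∂(μseq n)) atTop (𝓝 (∫ x, g x ∂μ)))
    (hzero : ∀ n, (μseq n) {x | η x = 0} = 0)
    (hzeroμ : μ {x | η x = 0} = 0)
    (hlim : Tendsto (fun n => ∫ x, Real.log (η x) ∂(μseq n)) atTop
      (𝓝 (∫ x, Real.log (η x) ∂μ)))
    {T : ℝ} (hT : 0 ≤ T) :
    Tendsto (fun n => Dtail η (μseq n) T) atTop (𝓝 (Dtail η μ T)) := by
  have hcont : Continuous fun x => -Real.log (max (η x) (Real.exp (-T))) := by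
    refine Continuous.neg (Continuous.log (hηc.max continuous_const) fun x => ?_)
    exact ne_of_gt (lt_of_lt_of_le (Real.exp_pos _) (le_max_right _ _))
  set c : C(X, ℝ) := ⟨fun x => -Real.log (max (η x) (Real.exp (-T))), hcont⟩ with hc
  have hae : ∀ (ν : Measure X), ν {x | η x = 0} = 0 →
      ∫ x, min (-Real.log (η x)) T ∂ν = ∫ x, c x ∂ν := by
    intro ν hz
    refine integral_congr_ae ?_
    have hcompl : ∀ᵐ x ∂ν, η x ≠ 0 := by
      rw [ae_iff]; simpa using hz
    filter_upwards [hcompl] with x hx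
    have hxpos : 0 < η x := lt_of_le_of_ne (hη01 x).1 (Ne.symm hx)
    by_cases hcase : Real.exp (-T) ≤ η x
    · rw [hc]
      simp only [ContinuousMap.coe_mk]
      rw [max_eq_left hcase]
      refine min_eq_left ?_
      have : -T ≤ Real.log (η x) := (Real.le_log_iff_exp_le hxpos).2 hcase
      linarith
    · push_neg at hcase
      rw [hc]
      simp only [ContinuousMap.coe_mk]
      rw [max_eq_right hcase.le, Real.log_exp, neg_neg]
      refine min_eq_right ?_
      have : Real.log (η x) ≤ -T := (Real.log_le_iff_le_exp hxpos).2 hcase.le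
      linarith
  have h2 : Tendsto (fun n => ∫ x, min (-Real.log (η x)) T ∂(μseq n)) atTop
      (𝓝 (∫ x, min (-Real.log (η x)) T ∂μ)) := by
    rw [hae μ hzeroμ]
    refine Tendsto.congr (fun n => (hae (μseq n) (hzero n)).symm) (hweak c)
  have h1 : Tendsto (fun n => ∫ x, -Real.log (η x) ∂(μseq n)) atTop
      (𝓝 (∫ x, -Real.log (η x) ∂μ)) := by
    have := hlim.neg
    simp only [← integral_neg] at this
    exact this
  exact h1.sub h2

lemma exists_uniform_Dtail {η : X → ℝ} (hηc : Continuous η)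
    (hη01 : ∀ x, η x ∈ Icc (0:ℝ) 1)
    {μseq : ℕ → Measure X} {μ : Measure X}
    [∀ n, IsProbabilityMeasure (μseq n)] [IsProbabilityMeasure μ]
    (hweak : ∀ g : C(X, ℝ),
      Tendsto (fun n => ∫ x, g x ∂(μseq n)) atTop (𝓝 (∫ x, g x ∂μ)))
    (hint : ∀ n, Integrable (fun x => Real.log (η x)) (μseq n))
    (hzero : ∀ n, (μseq n) {x | η x = 0} = 0)
    (hintμ : Integrable (fun x => Real.log (η x)) μ)
    (hzeroμ : μ {x | η x = 0} = 0)
    (hlim : Tendsto (fun n => ∫ x, Real.log (η x) ∂(μseq n)) atTop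
      (𝓝 (∫ x, Real.log (η x) ∂μ)))
    {ε : ℝ} (hε : 0 < ε) :
    ∃ T : ℕ, ∀ u : ℝ, (T : ℝ) ≤ u →
      (∀ n, Dtail η (μseq n) u ≤ ε) ∧ Dtail η μ u ≤ ε := by
  have hμ0 : ∀ᶠ T : ℕ in atTop, Dtail η μ (T : ℝ) < ε/2 :=
    (tendsto_Dtail_zero hηc hη01 hintμ).eventually_lt_const (by linarith)
  obtain ⟨T₀, hT₀⟩ := hμ0.exists
  have hN : ∀ᶠ n in atTop, Dtail η (μseq n) (T₀ : ℝ) < ε := by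
    have := tendsto_Dtail_in_n hηc hη01 hweak hzero hzeroμ hlim (T := (T₀ : ℝ))
      (T₀.cast_nonneg)
    exact this.eventually_lt_const (by linarith)
  obtain ⟨N, hNn⟩ := Filter.eventually_atTop.1 hN
  have hTn : ∀ n, ∃ Tn : ℕ, Dtail η (μseq n) (Tn : ℝ) < ε := fun n =>
    ((tendsto_Dtail_zero hηc hη01 (hint n)).eventually_lt_const hε).exists
  choose Tn hTn' using hTn
  refine ⟨max T₀ ((Finset.range N).sup Tn), fun u hu => ?_⟩
  have hu0 : (T₀ : ℝ) ≤ u := le_trans (by exact_mod_cast le_max_left _ _) hu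
  constructor
  · intro n
    by_cases hn : N ≤ n
    · calc Dtail η (μseq n) u ≤ Dtail η (μseq n) (T₀ : ℝ) :=
            Dtail_antitone hηc hη01 (T₀.cast_nonneg) hu0
        _ ≤ ε := (hNn n hn).le
    · push_neg at hn
      have hTn_le : ((Tn n : ℕ) : ℝ) ≤ u := by
        refine le_trans ?_ hu
        have : Tn n ≤ max T₀ ((Finset.range N).sup Tn) :=
          le_trans (Finset.le_sup (Finset.mem_range.2 hn)) (le_max_right _ _)
        exact_mod_cast this
      calc Dtail η (μseq n) u ≤ Dtail η (μseq n) ((Tn n : ℕ) : ℝ) :=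
            Dtail_antitone hηc hη01 ((Tn n).cast_nonneg) hTn_le
        _ ≤ ε := (hTn' n).le
  · calc Dtail η μ u ≤ Dtail η μ (T₀ : ℝ) :=
          Dtail_antitone hηc hη01 (T₀.cast_nonneg) hu0
      _ ≤ ε := by linarith


/-- The truncated `lintegral` dominating the weighted atom sums. -/
def Gint (η : X → ℝ) (ν : Measure X) (t : ℕ) : ℝ≥0∞ :=
  ∫⁻ x, ({y : X | η y ≤ Real.exp (1 - (t : ℝ))}.indicator
    (fun y => ENNReal.ofReal (1 - Real.log (η y)))) x ∂ν

/-- The main tail estimate for the entropy sum outside the finite core. -/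
lemma tsum_tail_le
    {f : X → X} {I : Set X} (hf : Measurable f) (hI : MeasurableSet I)
    {ν : Measure X} [IsProbabilityMeasure ν] (hν : Measure.map f ν = ν)
    {η : X → ℝ} {P : ℕ → Set X}
    (hPm : ∀ j, MeasurableSet (P j)) (hPd : Pairwise fun i j => Disjoint (P i) (P j))
    {lev : ℕ → ℕ} (hlev : ∀ j, (P j).Nonempty → P j ⊆ Vset η (lev j))
    {k : ℕ} {C : ℝ} (hC : 0 ≤ C)
    (hJ : ∀ m : ℕ, {i | (P i).Nonempty ∧ P i ⊆ Vset η m}.Finite ∧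
      (({i | (P i).Nonempty ∧ P i ⊆ Vset η m}.ncard : ℝ)
        ≤ C * Real.exp (2 * k * (m + 1 : ℝ))))
    (q : ℕ) (T : ℕ) :
    ∑' s : Fin q → ℕ,
      (if (∀ i : Fin q, (P (s i)).Nonempty ∧ lev (s i) + 1 < T) then 0
        else ENNReal.ofReal (Real.negMulLog
          ((ν (refinedAtoms f (fun j => P j ∩ dynOmega f I) q s)).toReal)))
      ≤ (q : ℝ≥0∞) * (ENNReal.ofReal (2 * (k : ℝ) + 2) *
          ((q : ℝ≥0∞) * (Gint η ν T + Gint η ν T)) +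
          (ENNReal.ofReal C) ^ q * ENNReal.ofReal (Real.exp (-(T : ℝ)))) := by
  classical
  set Q : ℕ → Set X := fun j => P j ∩ dynOmega f I with hQ
  have hQm : ∀ j, MeasurableSet (Q j) := fun j =>
    (hPm j).inter (measurableSet_dynOmega hf hI)
  have hQP : ∀ j, Q j ⊆ P j := fun j => inter_subset_left
  set A : (Fin q → ℕ) → Set X := fun s => ⋂ i : Fin q, f^[(i : ℕ)] ⁻¹' Q (s i) with hA
  have hAr : refinedAtoms f (fun j => P j ∩ dynOmega f I) q = A := rfl
  rw [hAr]
  have hAQ : ∀ (s : Fin q → ℕ) (i : Fin q), A s ⊆ f^[(i : ℕ)] ⁻¹' Q (s i) := by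
    intro s i
    exact iInter_subset _ i
  set aS : (Fin q → ℕ) → ℝ :=
    fun s => (2 * (k : ℝ) + 2) * ∑ i' : Fin q, ((lev (s i') : ℝ) + 1) with haS
  have haS0 : ∀ s, 0 ≤ aS s := by
    intro s
    exact mul_nonneg (by positivity) (Finset.sum_nonneg fun i' _ => by positivity)
  set Bi : Fin q → (Fin q → ℕ) → Prop :=
    fun i s => (∀ i' : Fin q, (P (s i')).Nonempty) ∧ T ≤ lev (s i) + 1 with hBi
  set cT : ℕ → ℝ≥0∞ := fun j =>
    if T ≤ lev j + 1 then ENNReal.ofReal ((lev j : ℝ) + 1) else 0 with hcT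
  set hfun : Fin q → Fin q → ℕ → ℝ≥0∞ := fun i i' j =>
    if (P j).Nonempty ∧ (i' = i → T ≤ lev j + 1)
      then ENNReal.ofReal (Real.exp (-(2 * (k : ℝ) + 2))) ^ (lev j + 1) else 0 with hhfun
  -- pointwise bound by a sum over the "bad coordinate"
  have claim0 : ∀ s : Fin q → ℕ,
      (if (∀ i : Fin q, (P (s i)).Nonempty ∧ lev (s i) + 1 < T) then 0
        else ENNReal.ofReal (Real.negMulLog ((ν (A s)).toReal)))
      ≤ ∑ i : Fin q, (if Bi i s then
          ENNReal.ofReal (aS s) * ν (A s) + ENNReal.ofReal (Real.exp (-(aS s + 1)))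
        else 0) := by
    intro s
    by_cases hF : (∀ i : Fin q, (P (s i)).Nonempty ∧ lev (s i) + 1 < T)
    · rw [if_pos hF]
      exact zero_le
    rw [if_neg hF]
    by_cases hne : ∀ i : Fin q, (P (s i)).Nonempty
    · push_neg at hF
      obtain ⟨i, hi⟩ := hF
      have hTi : T ≤ lev (s i) + 1 := by
        have := hi (hne i)
        omega
      have hBis : Bi i s := ⟨hne, hTi⟩
      have hterm : ENNReal.ofReal (Real.negMulLog ((ν (A s)).toReal))
          ≤ ENNReal.ofReal (aS s) * ν (A s) + ENNReal.ofReal (Real.exp (-(aS s + 1))) := by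
        refine le_trans (ENNReal.ofReal_le_ofReal
          (negMulLog_le_linear (aS s) ENNReal.toReal_nonneg)) ?_
        refine le_trans ENNReal.ofReal_add_le ?_
        refine add_le_add ?_ le_rfl
        rw [ENNReal.ofReal_mul (haS0 s), ENNReal.ofReal_toReal (measure_ne_top ν _)]
      calc ENNReal.ofReal (Real.negMulLog ((ν (A s)).toReal))
          ≤ (if Bi i s then
              ENNReal.ofReal (aS s) * ν (A s) + ENNReal.ofReal (Real.exp (-(aS s + 1)))
            else 0) := by rw [if_pos hBis]; exact hterm
        _ ≤ _ := Finset.single_le_sum (f := fun i : Fin q =>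
            (if Bi i s then
              ENNReal.ofReal (aS s) * ν (A s) + ENNReal.ofReal (Real.exp (-(aS s + 1)))
            else 0)) (fun _ _ => zero_le) (Finset.mem_univ i)
    · push_neg at hne
      obtain ⟨i, hi⟩ := hne
      have hAe : A s = ∅ := by
        refine eq_empty_of_subset_empty ((hAQ s i).trans ?_)
        have hQe : Q (s i) = ∅ := by
          rw [hQ]
          simp [hi]
        rw [hQe]
        simp
      rw [hAe]
      simp
  refine le_trans (ENNReal.tsum_le_tsum claim0) ?_
  rw [Summable.tsum_finsetSum (fun (i : Fin q) _ => ENNReal.summable)]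
  -- the W-bound for a single coordinate
  have hW : ∀ i₀ : Fin q, ∑' s : Fin q → ℕ, cT (s i₀) * ν (A s) ≤ Gint η ν T := by
    intro i₀
    refine le_trans (coord_group_le hf hν hPm hPd hQm hQP i₀ cT) ?_
    exact weight_sum_le_lintegral hPm hPd hlev T
  have keyi : ∀ i : Fin q,
      (∑' s : Fin q → ℕ, (if Bi i s then
          ENNReal.ofReal (aS s) * ν (A s) + ENNReal.ofReal (Real.exp (-(aS s + 1)))
        else 0))
      ≤ ENNReal.ofReal (2 * (k : ℝ) + 2) * ((q : ℝ≥0∞) * (Gint η ν T + Gint η ν T)) +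
          (ENNReal.ofReal C) ^ q * ENNReal.ofReal (Real.exp (-(T : ℝ))) := by
    intro i
    have hptwise : ∀ s : Fin q → ℕ,
        (if Bi i s then
          ENNReal.ofReal (aS s) * ν (A s) + ENNReal.ofReal (Real.exp (-(aS s + 1)))
        else 0)
        ≤ (ENNReal.ofReal (2 * (k : ℝ) + 2) *
              ∑ i' : Fin q, ((cT (s i') + cT (s i)) * ν (A s)))
          + ∏ i' : Fin q, hfun i i' (s i') := by
      intro s
      by_cases hBis : Bi i s
      · rw [if_pos hBis]
        refine add_le_add ?_ ?_
        · have ha : ENNReal.ofReal (aS s)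
              = ENNReal.ofReal (2 * (k : ℝ) + 2) *
                  ∑ i' : Fin q, ENNReal.ofReal ((lev (s i') : ℝ) + 1) := by
            rw [haS, ENNReal.ofReal_mul (by positivity)]
            congr 1
            rw [ENNReal.ofReal_sum_of_nonneg (fun i' _ => by positivity)]
          rw [ha, mul_assoc, Finset.sum_mul]
          refine mul_le_mul_right (Finset.sum_le_sum fun i' _ => ?_) _
          refine mul_le_mul_left ?_ _
          by_cases hci' : T ≤ lev (s i') + 1
          · simp only [hcT, if_pos hci']
            exact le_self_add
          · have h1 : cT (s i') = 0 := by simp only [hcT, if_neg hci']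
            have h2 : cT (s i) = ENNReal.ofReal ((lev (s i) : ℝ) + 1) := by
              simp only [hcT, if_pos hBis.2]
            rw [h1, h2, zero_add]
            refine ENNReal.ofReal_le_ofReal ?_
            have : lev (s i') + 1 ≤ lev (s i) + 1 := by omega
            exact_mod_cast this
        · have hexp : Real.exp (-(aS s + 1)) ≤ Real.exp (-aS s) :=
            Real.exp_le_exp.2 (by linarith)
          refine le_trans (ENNReal.ofReal_le_ofReal hexp) ?_
          have hprod : Real.exp (-aS s)
              = ∏ i' : Fin q, Real.exp (-((2 * (k : ℝ) + 2) * ((lev (s i') : ℝ) + 1))) := by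
            rw [← Real.exp_sum, Real.exp_eq_exp]
            simp only [haS]
            rw [Finset.mul_sum]
            exact (Finset.sum_neg_distrib _).symm
          rw [hprod, ENNReal.ofReal_prod_of_nonneg (fun i' _ => (Real.exp_pos _).le)]
          refine Finset.prod_le_prod' fun i' _ => ?_
          have hcond : (P (s i')).Nonempty ∧ (i' = i → T ≤ lev (s i') + 1) :=
            ⟨hBis.1 i', fun hii => by rw [hii]; exact hBis.2⟩
          simp only [hhfun, if_pos hcond]
          rw [← ENNReal.ofReal_pow (Real.exp_nonneg _), ← Real.exp_nat_mul]
          refine le_of_eq ?_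
          congr 1
          push_cast
          ring
      · rw [if_neg hBis]
        exact zero_le
    refine le_trans (ENNReal.tsum_le_tsum hptwise) ?_
    rw [ENNReal.tsum_add]
    refine add_le_add ?_ ?_
    · rw [ENNReal.tsum_mul_left]
      refine mul_le_mul_right ?_ _
      rw [Summable.tsum_finsetSum (fun (i' : Fin q) _ => ENNReal.summable)]
      have hinner : ∀ i' : Fin q, ∑' s : Fin q → ℕ, (cT (s i') + cT (s i)) * ν (A s)
          ≤ Gint η ν T + Gint η ν T := by
        intro i'
        calc ∑' s : Fin q → ℕ, (cT (s i') + cT (s i)) * ν (A s)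
            = ∑' s : Fin q → ℕ, (cT (s i') * ν (A s) + cT (s i) * ν (A s)) := by
              refine tsum_congr fun s => ?_
              rw [add_mul]
          _ = (∑' s : Fin q → ℕ, cT (s i') * ν (A s))
              + ∑' s : Fin q → ℕ, cT (s i) * ν (A s) := ENNReal.tsum_add
          _ ≤ Gint η ν T + Gint η ν T := add_le_add (hW i') (hW i)
      calc ∑ i' : Fin q, ∑' s : Fin q → ℕ, (cT (s i') + cT (s i)) * ν (A s)
          ≤ ∑ _i' : Fin q, (Gint η ν T + Gint η ν T) :=
            Finset.sum_le_sum fun i' _ => hinner i'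
        _ = (q : ℝ≥0∞) * (Gint η ν T + Gint η ν T) := by
            rw [Finset.sum_const, Finset.card_univ, Fintype.card_fin, nsmul_eq_mul]
    · rw [tsum_pi_prod q (hfun i)]
      have hfactor : ∀ i' : Fin q, (∑' j : ℕ, hfun i i' j)
          ≤ ENNReal.ofReal C *
              (if i' = i then ENNReal.ofReal (Real.exp (-(T : ℝ))) else 1) := by
        intro i'
        by_cases hii : i' = i
        · subst hii
          rw [if_pos rfl]
          refine le_trans (ENNReal.tsum_le_tsum (fun j => ?_))
            (count_sum_le hlev hC hJ T)
          by_cases hcond : (P j).Nonempty ∧ (i' = i' → T ≤ lev j + 1)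
          · simp only [hhfun, if_pos hcond,
              if_pos (And.intro hcond.1 (hcond.2 rfl))]
            exact le_rfl
          · simp only [hhfun, if_neg hcond]
            exact zero_le
        · rw [if_neg hii]
          refine le_trans (ENNReal.tsum_le_tsum (fun j => ?_))
            (le_trans (count_sum_le hlev hC hJ 0) ?_)
          · by_cases hcond : (P j).Nonempty ∧ (i' = i → T ≤ lev j + 1)
            · simp only [hhfun, if_pos hcond,
                if_pos (And.intro hcond.1 (Nat.zero_le _))]
              exact le_rfl
            · simp only [hhfun, if_neg hcond]
              exact zero_le
          · refine mul_le_mul_right ?_ _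
            simp
      refine le_trans (Finset.prod_le_prod' fun i' _ => hfactor i') ?_
      rw [Finset.prod_mul_distrib, Finset.prod_const, Finset.card_univ, Fintype.card_fin]
      rw [Finset.prod_ite_eq' Finset.univ i
        (fun _ => ENNReal.ofReal (Real.exp (-(T : ℝ)))), if_pos (Finset.mem_univ i)]
  refine le_trans (Finset.sum_le_sum fun i _ => keyi i) ?_
  rw [Finset.sum_const, Finset.card_univ, Fintype.card_fin, nsmul_eq_mul]


lemma measure_atom_eq {f : X → X} {I : Set X} (hf : Measurable f) (hI : MeasurableSet I)
    {ν : Measure X} (hνI : ν I = 0) (hν : Measure.map f ν = ν)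
    {P : ℕ → Set X} {q : ℕ} (s : Fin q → ℕ) :
    ν (refinedAtoms f (fun j => P j ∩ dynOmega f I) q s)
      = ν (⋂ i : Fin q, f^[(i : ℕ)] ⁻¹' P (s i)) := by
  set B : Set X := ⋂ i : Fin q, f^[(i : ℕ)] ⁻¹' P (s i) with hB
  set A : Set X := refinedAtoms f (fun j => P j ∩ dynOmega f I) q s with hA
  have hAB : A ⊆ B := by
    refine iInter_mono fun i => preimage_mono ?_
    exact inter_subset_left
  have hBA : B ∩ dynOmega f I ⊆ A := by
    rintro x ⟨hxB, hxΩ⟩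
    refine mem_iInter.2 fun i => ?_
    exact ⟨mem_iInter.1 hxB i, mapsTo_dynOmega (i : ℕ) hxΩ⟩
  refine le_antisymm (measure_mono hAB) ?_
  have hsplit : B ⊆ A ∪ (dynOmega f I)ᶜ := by
    intro x hx
    by_cases hxΩ : x ∈ dynOmega f I
    · exact Or.inl (hBA ⟨hx, hxΩ⟩)
    · exact Or.inr hxΩ
  calc ν B ≤ ν (A ∪ (dynOmega f I)ᶜ) := measure_mono hsplit
    _ ≤ ν A + ν (dynOmega f I)ᶜ := measure_union_le _ _
    _ = ν A := by rw [dynOmega_compl_null hf hI hνI hν, add_zero]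

lemma tendsto_measure_atom
    {f : X → X} {I : Set X} (hI : IsClosed I) (hf : Measurable f)
    (hfc : ContinuousOn f Iᶜ)
    {μseq : ℕ → Measure X} {μ : Measure X}
    (hμseq : ∀ n, MemM f I (μseq n)) (hμ : MemM f I μ)
    (hweak : ∀ g : C(X, ℝ),
      Tendsto (fun n => ∫ x, g x ∂(μseq n)) atTop (𝓝 (∫ x, g x ∂μ)))
    {P : ℕ → Set X} (hbd : ∀ j, μ (frontier (P j)) = 0)
    {q : ℕ} (s : Fin q → ℕ) :
    Tendsto (fun n => ((μseq n) (refinedAtoms f (fun j => P j ∩ dynOmega f I) q s)).toReal)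
      atTop (𝓝 ((μ (refinedAtoms f (fun j => P j ∩ dynOmega f I) q s)).toReal)) := by
  haveI hPn : ∀ n, IsProbabilityMeasure (μseq n) := fun n => (hμseq n).1
  haveI hPμ : IsProbabilityMeasure μ := hμ.1
  set B : Set X := ⋂ i : Fin q, f^[(i : ℕ)] ⁻¹' P (s i) with hB
  -- the boundary of B is null for μ
  have hfrontier : μ (frontier B) = 0 := by
    have hsub := frontier_iInter_subset (fun i : Fin q => f^[(i : ℕ)] ⁻¹' P (s i))
    refine measure_mono_null hsub (measure_iUnion_null fun i => ?_)
    have hsub2 := frontier_preimage_iterate_subset hI hfc (i : ℕ) (P (s i))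
    refine measure_mono_null hsub2 (measure_union_null ?_ ?_)
    · have : (⋃ l, f^[l] ⁻¹' I) = (dynOmega f I)ᶜ := by
        ext x; simp [dynOmega]
      rw [this]
      exact dynOmega_compl_null hf hI.measurableSet hμ.2.1 hμ.2.2
    · rw [iterate_invariant hf hμ.2.2 _ isClosed_frontier.measurableSet]
      exact hbd (s i)
  -- weak convergence of the probability measures
  set μP : ProbabilityMeasure X := ⟨μ, hμ.1⟩ with hμP
  set μsP : ℕ → ProbabilityMeasure X := fun n => ⟨μseq n, (hμseq n).1⟩ with hμsP
  have hconv : Tendsto μsP atTop (𝓝 μP) := by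
    refine ProbabilityMeasure.tendsto_iff_forall_integral_tendsto.2 fun g => ?_
    exact hweak g.toContinuousMap
  have hBconv : Tendsto (fun n => (μseq n) B) atTop (𝓝 (μ B)) :=
    ProbabilityMeasure.tendsto_measure_of_null_frontier_of_tendsto' hconv hfrontier
  have hBreal : Tendsto (fun n => ((μseq n) B).toReal) atTop (𝓝 ((μ B).toReal)) :=
    (ENNReal.tendsto_toReal (measure_ne_top μ B)).comp hBconv
  have hμeq : μ (refinedAtoms f (fun j => P j ∩ dynOmega f I) q s) = μ B :=
    measure_atom_eq hf hI.measurableSet hμ.2.1 hμ.2.2 s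
  rw [hμeq]
  refine hBreal.congr fun n => ?_
  rw [measure_atom_eq hf hI.measurableSet (hμseq n).2.1 (hμseq n).2.2 s]

end EntropyAux

/-- **Proposition (continuity of refined partition entropies).** Let `(μ_n)` be a sequence
of `𝓜` converging weakly to `μ ∈ 𝓜` with `lim_n ∫ log η dμ_n = ∫ log η dμ > -∞`
(the condition `> -∞` is encoded as integrability of `log ∘ η` together with
`ν{η = 0} = 0`). If `μ` gives no mass to the boundaries of the atoms of the Mané
partition `𝒫`, then for every `q ≥ 1`,
`lim_n H_{μ_n}(⋁_{i=0}^{q-1} f^{-i}𝒫) = H_μ(⋁_{i=0}^{q-1} f^{-i}𝒫)`,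
where `𝒫` is restricted to `Ω`. -/
theorem entropy_of_refined_partition_continuous
    (k : ℕ) (f : X → X) (I : Set X) (hI : IsClosed I)
    (hf : Measurable f) (hfc : ContinuousOn f Iᶜ)
    (η : X → ℝ) (hηc : Continuous η) (hη01 : ∀ x, η x ∈ Icc (0 : ℝ) 1)
    (hηI : ∀ x ∈ I, η x = 0)
    (P : ℕ → Set X) (hP : IsManePartition k η P)
    (μseq : ℕ → Measure X) (μ : Measure X)
    (hμseq : ∀ n, MemM f I (μseq n)) (hμ : MemM f I μ)
    (hweak : ∀ g : C(X, ℝ),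
      Tendsto (fun n => ∫ x, g x ∂(μseq n)) atTop (𝓝 (∫ x, g x ∂μ)))
    (hint : ∀ n, Integrable (fun x => Real.log (η x)) (μseq n))
    (hzero : ∀ n, (μseq n) {x | η x = 0} = 0)
    (hintμ : Integrable (fun x => Real.log (η x)) μ)
    (hzeroμ : μ {x | η x = 0} = 0)
    (hlim : Tendsto (fun n => ∫ x, Real.log (η x) ∂(μseq n)) atTop
      (𝓝 (∫ x, Real.log (η x) ∂μ)))
    (hbd : ∀ i, μ (frontier (P i)) = 0)
    (q : ℕ) (hq : 1 ≤ q) :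
    Tendsto
      (fun n => (partEntropy (μseq n)
        (refinedAtoms f (fun i => P i ∩ dynOmega f I) q)).toReal) atTop
      (𝓝 ((partEntropy μ
        (refinedAtoms f (fun i => P i ∩ dynOmega f I) q)).toReal)) := by
  classical
  haveI hPn : ∀ n, IsProbabilityMeasure (μseq n) := fun n => (hμseq n).1
  haveI hPμ : IsProbabilityMeasure μ := hμ.1
  obtain ⟨⟨hPm, hPd, hPu⟩, hPV, ⟨C, hC, hJ⟩⟩ := hP
  -- the level function of the partition
  set lev : ℕ → ℕ := fun j => if h : (P j).Nonempty then (hPV j h).choose else 0 with hlevdef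
  have hlev : ∀ j, (P j).Nonempty → P j ⊆ Vset η (lev j) := by
    intro j hj
    simp only [hlevdef, dif_pos hj]
    exact (hPV j hj).choose_spec.1
  set A : (Fin q → ℕ) → Set X := refinedAtoms f (fun i => P i ∩ dynOmega f I) q with hAdef
  -- entropy terms and their nonnegativity
  have htoReal_le_one : ∀ (ν : Measure X), IsProbabilityMeasure ν →
      ∀ S : Set X, (ν S).toReal ≤ 1 := by
    intro ν hνP S
    have h1 : ν S ≤ 1 := prob_le_one
    calc (ν S).toReal ≤ (1 : ℝ≥0∞).toReal := ENNReal.toReal_mono ENNReal.one_ne_top h1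
      _ = 1 := ENNReal.toReal_one
  have he0 : ∀ n s, 0 ≤ Real.negMulLog ((μseq n (A s)).toReal) := fun n s =>
    Real.negMulLog_nonneg ENNReal.toReal_nonneg (htoReal_le_one _ (hPn n) _)
  have he0μ : ∀ s, 0 ≤ Real.negMulLog ((μ (A s)).toReal) := fun s =>
    Real.negMulLog_nonneg ENNReal.toReal_nonneg (htoReal_le_one _ hPμ _)
  -- termwise convergence
  have hterm : ∀ s : Fin q → ℕ,
      Tendsto (fun n => Real.negMulLog ((μseq n (A s)).toReal)) atTop
        (𝓝 (Real.negMulLog ((μ (A s)).toReal))) := fun s =>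
    (Real.continuous_negMulLog.tendsto _).comp
      (EntropyAux.tendsto_measure_atom hI hf hfc hμseq hμ hweak hbd s)
  -- the splitting of the entropy
  have hsplit : ∀ (ν : Measure X) (T : ℕ),
      partEntropy ν A
        = (∑' s : Fin q → ℕ, if (∀ i : Fin q, (P (s i)).Nonempty ∧ lev (s i) + 1 < T)
            then ENNReal.ofReal (Real.negMulLog ((ν (A s)).toReal)) else 0)
          + ∑' s : Fin q → ℕ, if (∀ i : Fin q, (P (s i)).Nonempty ∧ lev (s i) + 1 < T)
            then 0 else ENNReal.ofReal (Real.negMulLog ((ν (A s)).toReal)) := by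
    intro ν T
    rw [partEntropy, ← ENNReal.tsum_add]
    refine tsum_congr fun s => ?_
    by_cases h : ∀ i : Fin q, (P (s i)).Nonempty ∧ lev (s i) + 1 < T
    · rw [if_pos h, if_pos h, add_zero]
    · rw [if_neg h, if_neg h, zero_add]
  -- finiteness of the cores
  have hFfin : ∀ T : ℕ,
      {s : Fin q → ℕ | ∀ i : Fin q, (P (s i)).Nonempty ∧ lev (s i) + 1 < T}.Finite := by
    intro T
    set K : Set ℕ := {j | (P j).Nonempty ∧ lev j + 1 < T} with hKdef
    have hK : K.Finite := by
      have hsub : K ⊆ ⋃ m ∈ Finset.range T, {j | (P j).Nonempty ∧ P j ⊆ Vset η m} := by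
        intro j hj
        obtain ⟨hj1, hj2⟩ := hj
        have hjlev : lev j < T := by omega
        refine mem_iUnion₂.2 ⟨lev j, Finset.mem_range.2 hjlev, ?_⟩
        exact ⟨hj1, hlev j hj1⟩
      exact (Set.Finite.biUnion (Finset.range T).finite_toSet
        fun m _ => (hJ m).1).subset hsub
    have hsub2 : {s : Fin q → ℕ | ∀ i : Fin q, (P (s i)).Nonempty ∧ lev (s i) + 1 < T}
        ⊆ Set.pi univ (fun _ : Fin q => K) := by
      intro s hs i _
      exact hs i
    exact (Set.Finite.pi fun _ => hK).subset hsub2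
  -- main ε-argument
  rw [Metric.tendsto_atTop]
  intro ε hε
  set ε' : ℝ := ε / 4 with hε'def
  have hε' : 0 < ε' := by rw [hε'def]; linarith
  -- constants
  set K : ℝ := (q : ℝ) * ((2 * (k : ℝ) + 2) * ((q : ℝ) * 8)) + (q : ℝ) * C ^ q with hKdef
  have hK0 : 0 ≤ K := by
    have : (0:ℝ) ≤ C ^ q := pow_nonneg hC.le q
    rw [hKdef]
    positivity
  set δ : ℝ := ε' / (K + 1) with hδdef
  have hδ0 : 0 < δ := by
    rw [hδdef]
    positivity
  have hδK : δ * (K + 1) = ε' := by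
    rw [hδdef]
    field_simp
  -- choose the truncation threshold T
  obtain ⟨T₁, hT₁⟩ := EntropyAux.exists_uniform_Dtail hηc hη01 hweak hint hzero hintμ
    hzeroμ hlim hδ0
  have hexp0 : Tendsto (fun T : ℕ => Real.exp (-(T : ℝ))) atTop (𝓝 0) := by
    refine Real.tendsto_exp_atBot.comp ?_
    exact tendsto_neg_atBot_iff.2 tendsto_natCast_atTop_atTop
  obtain ⟨T₂, hT₂⟩ := Filter.eventually_atTop.1 (hexp0.eventually_lt_const hδ0)
  set T : ℕ := max (2 * T₁ + 2) (max 2 T₂) with hTdef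
  have hT2 : 2 ≤ T := le_trans (le_max_left _ _) (le_max_right _ _)
  have hTexp : Real.exp (-(T : ℝ)) ≤ δ :=
    (hT₂ T (le_trans (le_max_right _ _) (le_max_right _ _))).le
  have hTu : (T₁ : ℝ) ≤ ((T : ℝ) - 1) / 2 := by
    have h1 : (2 * T₁ + 2 : ℕ) ≤ T := le_max_left _ _
    have h2 : (2 * (T₁ : ℝ) + 2) ≤ (T : ℝ) := by exact_mod_cast h1
    linarith
  have hDn : ∀ n, EntropyAux.Dtail η (μseq n) (((T : ℝ) - 1) / 2) ≤ δ :=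
    (hT₁ _ hTu).1
  have hDμ : EntropyAux.Dtail η μ (((T : ℝ) - 1) / 2) ≤ δ := (hT₁ _ hTu).2
  -- uniform tail bound
  have htailbound : ∀ (ν : Measure X), IsProbabilityMeasure ν → Measure.map f ν = ν →
      ν {x | η x = 0} = 0 → Integrable (fun x => Real.log (η x)) ν →
      EntropyAux.Dtail η ν (((T : ℝ) - 1) / 2) ≤ δ →
      (∑' s : Fin q → ℕ, if (∀ i : Fin q, (P (s i)).Nonempty ∧ lev (s i) + 1 < T)
          then 0 else ENNReal.ofReal (Real.negMulLog ((ν (A s)).toReal)))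
        ≤ ENNReal.ofReal ε' := by
    intro ν hνP hνmap hνzero hνint hνD
    haveI := hνP
    have hG : EntropyAux.Gint η ν T ≤ ENNReal.ofReal (4 * δ) := by
      refine le_trans (EntropyAux.lintegral_tail_le hηc hη01 hνzero hνint T hT2) ?_
      refine ENNReal.ofReal_le_ofReal ?_
      have := hνD
      rw [EntropyAux.Dtail] at this
      linarith
    calc (∑' s : Fin q → ℕ, if (∀ i : Fin q, (P (s i)).Nonempty ∧ lev (s i) + 1 < T)
          then 0 else ENNReal.ofReal (Real.negMulLog ((ν (A s)).toReal)))
        ≤ (q : ℝ≥0∞) * (ENNReal.ofReal (2 * (k : ℝ) + 2) *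
            ((q : ℝ≥0∞) * (EntropyAux.Gint η ν T + EntropyAux.Gint η ν T)) +
            (ENNReal.ofReal C) ^ q * ENNReal.ofReal (Real.exp (-(T : ℝ)))) :=
          EntropyAux.tsum_tail_le hf hI.measurableSet hνmap hPm hPd hlev hC.le hJ q T
      _ ≤ (q : ℝ≥0∞) * (ENNReal.ofReal (2 * (k : ℝ) + 2) *
            ((q : ℝ≥0∞) * (ENNReal.ofReal (4 * δ) + ENNReal.ofReal (4 * δ))) +
            (ENNReal.ofReal C) ^ q * ENNReal.ofReal δ) := by
          have hTexp' : ENNReal.ofReal (Real.exp (-(T : ℝ))) ≤ ENNReal.ofReal δ :=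
            ENNReal.ofReal_le_ofReal hTexp
          gcongr
      _ = ENNReal.ofReal ((q : ℝ) * ((2 * (k : ℝ) + 2) * ((q : ℝ) * (4 * δ + 4 * δ))
            + C ^ q * δ)) := by
          rw [ENNReal.ofReal_mul (by positivity : (0:ℝ) ≤ (q : ℝ)),
            ENNReal.ofReal_add (by positivity : (0:ℝ) ≤ (2 * (k:ℝ) + 2) * ((q:ℝ) * (4 * δ + 4 * δ)))
              (by positivity : (0:ℝ) ≤ C ^ q * δ),
            ENNReal.ofReal_mul (by positivity : (0:ℝ) ≤ 2 * (k:ℝ) + 2),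
            ENNReal.ofReal_mul (by positivity : (0:ℝ) ≤ (q : ℝ)),
            ENNReal.ofReal_add (by positivity : (0:ℝ) ≤ 4 * δ) (by positivity : (0:ℝ) ≤ 4 * δ),
            ENNReal.ofReal_mul (by positivity : (0:ℝ) ≤ C ^ q),
            ENNReal.ofReal_pow hC.le, ENNReal.ofReal_natCast]
      _ ≤ ENNReal.ofReal ε' := by
          refine ENNReal.ofReal_le_ofReal ?_
          have heq : (q : ℝ) * ((2 * (k : ℝ) + 2) * ((q : ℝ) * (4 * δ + 4 * δ))
              + C ^ q * δ) = K * δ := by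
            rw [hKdef]
            ring
          rw [heq]
          nlinarith [hδK, hδ0.le, hK0]
  have htail : ∀ n, (∑' s : Fin q → ℕ,
      if (∀ i : Fin q, (P (s i)).Nonempty ∧ lev (s i) + 1 < T)
        then 0 else ENNReal.ofReal (Real.negMulLog ((μseq n (A s)).toReal)))
      ≤ ENNReal.ofReal ε' := fun n =>
    htailbound (μseq n) (hPn n) (hμseq n).2.2 (hzero n) (hint n) (hDn n)
  have htailμ : (∑' s : Fin q → ℕ,
      if (∀ i : Fin q, (P (s i)).Nonempty ∧ lev (s i) + 1 < T)
        then 0 else ENNReal.ofReal (Real.negMulLog ((μ (A s)).toReal)))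
      ≤ ENNReal.ofReal ε' :=
    htailbound μ hPμ hμ.2.2 hzeroμ hintμ hDμ
  -- the finite core sum
  set Fs : Finset (Fin q → ℕ) := (hFfin T).toFinset with hFsdef
  have hhead : ∀ (ν : Measure X),
      (∑' s : Fin q → ℕ, if (∀ i : Fin q, (P (s i)).Nonempty ∧ lev (s i) + 1 < T)
          then ENNReal.ofReal (Real.negMulLog ((ν (A s)).toReal)) else 0)
        = ∑ s ∈ Fs, ENNReal.ofReal (Real.negMulLog ((ν (A s)).toReal)) := by
    intro ν
    rw [tsum_eq_sum (s := Fs) ?_]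
    · refine Finset.sum_congr rfl fun s hs => ?_
      rw [if_pos (show (∀ i : Fin q, (P (s i)).Nonempty ∧ lev (s i) + 1 < T) from
        (hFfin T).mem_toFinset.1 hs)]
    · intro s hs
      rw [if_neg (show ¬(∀ i : Fin q, (P (s i)).Nonempty ∧ lev (s i) + 1 < T) from
        fun h => hs ((hFfin T).mem_toFinset.2 h))]
  -- decompose the entropies into core + tail (real versions)
  have hdecomp : ∀ (ν : Measure X), IsProbabilityMeasure ν →
      ∀ tl : ℝ≥0∞, tl ≤ ENNReal.ofReal ε' →
      (∀ s, 0 ≤ Real.negMulLog ((ν (A s)).toReal)) →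
      partEntropy ν A = (∑ s ∈ Fs, ENNReal.ofReal (Real.negMulLog ((ν (A s)).toReal))) + tl →
      (partEntropy ν A).toReal
        = (∑ s ∈ Fs, Real.negMulLog ((ν (A s)).toReal)) + tl.toReal ∧
        tl.toReal ≤ ε' ∧ 0 ≤ tl.toReal := by
    intro ν hνP tl htl hpos hsum
    have htlne : tl ≠ ∞ := ne_top_of_le_ne_top ENNReal.ofReal_ne_top htl
    have hheadne : (∑ s ∈ Fs, ENNReal.ofReal (Real.negMulLog ((ν (A s)).toReal))) ≠ ∞ := by
      refine (lt_of_le_of_lt (Finset.sum_le_sum fun s _ => le_rfl) ?_).ne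
      exact ENNReal.sum_lt_top.2 fun s _ => ENNReal.ofReal_lt_top
    refine ⟨?_, ?_, ENNReal.toReal_nonneg⟩
    · rw [hsum, ENNReal.toReal_add hheadne htlne]
      congr 1
      rw [ENNReal.toReal_sum fun s _ => ENNReal.ofReal_ne_top]
      exact Finset.sum_congr rfl fun s _ => ENNReal.toReal_ofReal (hpos s)
    · calc tl.toReal ≤ (ENNReal.ofReal ε').toReal :=
          ENNReal.toReal_mono ENNReal.ofReal_ne_top htl
        _ = ε' := ENNReal.toReal_ofReal hε'.le
  -- apply the decomposition
  have hdecn : ∀ n, (partEntropy (μseq n) A).toReal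
      = (∑ s ∈ Fs, Real.negMulLog ((μseq n (A s)).toReal))
        + (∑' s : Fin q → ℕ, if (∀ i : Fin q, (P (s i)).Nonempty ∧ lev (s i) + 1 < T)
            then 0 else ENNReal.ofReal (Real.negMulLog ((μseq n (A s)).toReal))).toReal ∧
      (∑' s : Fin q → ℕ, if (∀ i : Fin q, (P (s i)).Nonempty ∧ lev (s i) + 1 < T)
            then 0 else ENNReal.ofReal (Real.negMulLog ((μseq n (A s)).toReal))).toReal ≤ ε' ∧
      0 ≤ (∑' s : Fin q → ℕ, if (∀ i : Fin q, (P (s i)).Nonempty ∧ lev (s i) + 1 < T)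
            then 0 else ENNReal.ofReal (Real.negMulLog ((μseq n (A s)).toReal))).toReal := by
    intro n
    refine hdecomp (μseq n) (hPn n) _ (htail n) (he0 n) ?_
    rw [hsplit (μseq n) T, hhead (μseq n)]
  have hdecμ : (partEntropy μ A).toReal
      = (∑ s ∈ Fs, Real.negMulLog ((μ (A s)).toReal))
        + (∑' s : Fin q → ℕ, if (∀ i : Fin q, (P (s i)).Nonempty ∧ lev (s i) + 1 < T)
            then 0 else ENNReal.ofReal (Real.negMulLog ((μ (A s)).toReal))).toReal ∧
      (∑' s : Fin q → ℕ, if (∀ i : Fin q, (P (s i)).Nonempty ∧ lev (s i) + 1 < T)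
            then 0 else ENNReal.ofReal (Real.negMulLog ((μ (A s)).toReal))).toReal ≤ ε' ∧
      0 ≤ (∑' s : Fin q → ℕ, if (∀ i : Fin q, (P (s i)).Nonempty ∧ lev (s i) + 1 < T)
            then 0 else ENNReal.ofReal (Real.negMulLog ((μ (A s)).toReal))).toReal := by
    refine hdecomp μ hPμ _ htailμ he0μ ?_
    rw [hsplit μ T, hhead μ]
  -- convergence of the finite core sums
  have hsumconv : Tendsto (fun n => ∑ s ∈ Fs, Real.negMulLog ((μseq n (A s)).toReal)) atTop
      (𝓝 (∑ s ∈ Fs, Real.negMulLog ((μ (A s)).toReal))) :=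
    tendsto_finset_sum _ fun s _ => hterm s
  obtain ⟨N, hN⟩ := Metric.tendsto_atTop.1 hsumconv ε' hε'
  refine ⟨N, fun n hn => ?_⟩
  obtain ⟨h1n, h2n, h3n⟩ := hdecn n
  obtain ⟨h1μ, h2μ, h3μ⟩ := hdecμ
  have hd := hN n hn
  rw [Real.dist_eq] at hd ⊢
  rw [h1n, h1μ]
  set Sn : ℝ := ∑ s ∈ Fs, Real.negMulLog ((μseq n (A s)).toReal)
  set Sμ : ℝ := ∑ s ∈ Fs, Real.negMulLog ((μ (A s)).toReal)
  set tn : ℝ := (∑' s : Fin q → ℕ, if (∀ i : Fin q, (P (s i)).Nonempty ∧ lev (s i) + 1 < T)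
      then 0 else ENNReal.ofReal (Real.negMulLog ((μseq n (A s)).toReal))).toReal
  set tμ : ℝ := (∑' s : Fin q → ℕ, if (∀ i : Fin q, (P (s i)).Nonempty ∧ lev (s i) + 1 < T)
      then 0 else ENNReal.ofReal (Real.negMulLog ((μ (A s)).toReal))).toReal
  have habs : |(Sn + tn) - (Sμ + tμ)| ≤ |Sn - Sμ| + |tn - tμ| := by
    have : (Sn + tn) - (Sμ + tμ) = (Sn - Sμ) + (tn - tμ) := by ring
    rw [this]
    exact abs_add_le _ _
  have habs2 : |tn - tμ| ≤ ε' := abs_le.2 ⟨by linarith, by linarith⟩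
  have : |Sn - Sμ| < ε' := hd
  calc |(Sn + tn) - (Sμ + tμ)| ≤ |Sn - Sμ| + |tn - tμ| := habs
    _ < ε' + ε' := by linarith
    _ ≤ ε := by rw [hε'def]; linarith
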